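/- Let a_r(α) = 2^{−r}·C(r+1, α) be the cardinal B-spline subdivision mask of degree r, with subdivision operator (S_{a_r}c)(α) = Σ_β a_r(α − 2β)c(β) acting on polynomial sequences. Define ℓ_r(x) = (1/r!)·∏_{j=1}^r (x+j) and p_i = ℓ_r^{(r−i)} (the (r−i)-th derivative). Then S_{a_r} p_i = 2^{−i} p_i for i = 0, …, r, i.e. the polynomials p_i (restricted to ℤ) are eigensequences of the B-spline subdivision operator with eigenvalue 2^{−i}. -/

import Mathlib

open Polynomial

/-- The cardinal B-spline subdivision mask of degree `r`: `a_r(α) = 2^{-r}·C(r+1, α)`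
(zero for `α < 0`; the binomial coefficient vanishes for `α > r+1`). -/
noncomputable def bsplineMask (r : ℕ) (α : ℤ) : ℝ :=
  if 0 ≤ α then ((r + 1).choose α.toNat : ℝ) / 2 ^ r else 0

/-- `ℓ_r(x) = (1/r!)·(x+1)(x+2)⋯(x+r)`. -/
noncomputable def ellr (r : ℕ) : Polynomial ℝ :=
  ((r.factorial : ℝ))⁻¹ • ∏ j ∈ Finset.Icc 1 r, (X + C (j : ℝ))

namespace BsplineAux

open Finset fwdDiff

/-! ### Alternating sums of binomial coefficients against polynomials -/

lemma fwdDiff_polyEval (p : Polynomial ℝ) :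
    Δ_[(1:ℝ)] (fun x : ℝ => p.eval x) = fun x : ℝ => (p.comp (X + C 1) - p).eval x := by
  funext x
  simp [fwdDiff, eval_comp]

lemma fwdDiff_iter_zero_fun (n : ℕ) :
    Δ_[(1:ℝ)] ^[n] (fun _ : ℝ => (0:ℝ)) = fun _ : ℝ => (0:ℝ) := by
  induction n with
  | zero => rfl
  | succ n ih => rw [Function.iterate_succ_apply]; simpa [fwdDiff] using ih

lemma deg_drop (p : Polynomial ℝ) (hp : p.natDegree ≠ 0) :
    (p.comp (X + C 1) - p).natDegree < p.natDegree := by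
  have hp0 : p ≠ 0 := fun h => hp (by simp [h])
  have hX : (X + C (1:ℝ)).natDegree = 1 := natDegree_X_add_C 1
  have hnc : (p.comp (X + C 1)).natDegree = p.natDegree := by
    rw [natDegree_comp, hX, mul_one]
  have hc0 : p.comp (X + C 1) ≠ 0 := by
    intro h
    rw [h, natDegree_zero] at hnc
    exact hp hnc.symm
  have hd : (p.comp (X + C 1)).degree = p.degree := by
    rw [degree_eq_natDegree hc0, degree_eq_natDegree hp0, hnc]
  have hlc : (p.comp (X + C 1)).leadingCoeff = p.leadingCoeff := by
    rw [leadingCoeff_comp (by rw [hX]; norm_num), leadingCoeff_X_add_C, one_pow, mul_one]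
  have hlt : (p.comp (X + C 1) - p).degree < p.degree :=
    hd ▸ degree_sub_lt hd hc0 hlc
  by_cases h0 : p.comp (X + C 1) - p = 0
  · rw [h0, natDegree_zero]
    exact Nat.pos_of_ne_zero hp
  · exact natDegree_lt_natDegree h0 hlt

lemma fwdDiff_iter_poly_zero (n : ℕ) (p : Polynomial ℝ) (h : p.natDegree < n) :
    Δ_[(1:ℝ)] ^[n] (fun x : ℝ => p.eval x) = fun _ : ℝ => (0:ℝ) := by
  induction n generalizing p with
  | zero => omega
  | succ n ih =>
    rw [Function.iterate_succ_apply, fwdDiff_polyEval]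
    by_cases hp : p.natDegree = 0
    · have : p = C (p.coeff 0) := eq_C_of_natDegree_eq_zero hp
      have hz : p.comp (X + C 1) - p = 0 := by rw [this]; simp
      rw [hz]
      simpa using fwdDiff_iter_zero_fun n
    · exact ih _ (lt_of_lt_of_le (deg_drop p hp) (by omega))

/-- The key alternating-sum lemma: the `n`-th alternating binomial sum of values of a
polynomial of degree `< n` along an arithmetic progression vanishes. -/
lemma alternating_sum_eq_zero (n : ℕ) (p : Polynomial ℝ) (hdeg : p.natDegree < n)
    (a b : ℝ) :
    ∑ k ∈ Finset.range (n + 1), (-1 : ℝ) ^ k * ((n.choose k : ℝ)) * p.eval (a + b * k) = 0 := by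
  have key := fwdDiff_iter_eq_sum_shift (1:ℝ) (fun x : ℝ => (p.comp (C a + C b * X)).eval x) n 0
  have hdeg' : (p.comp (C a + C b * X)).natDegree < n := by
    have h1 : (C a + C b * X : Polynomial ℝ).natDegree ≤ 1 := by
      refine le_trans (natDegree_add_le _ _) (max_le (by simp) ?_)
      refine le_trans (natDegree_mul_le) ?_
      simp
    calc (p.comp (C a + C b * X)).natDegree = p.natDegree * (C a + C b * X).natDegree :=
          natDegree_comp
    _ ≤ p.natDegree * 1 := Nat.mul_le_mul_left _ h1
    _ = p.natDegree := by ring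
    _ < n := hdeg
  rw [fwdDiff_iter_poly_zero n _ hdeg'] at key
  have key2 : ∑ k ∈ Finset.range (n + 1),
      (-1 : ℝ) ^ (n - k) * ((n.choose k : ℝ)) * p.eval (a + b * k) = 0 := by
    rw [eq_comm] at key
    calc ∑ k ∈ Finset.range (n + 1),
          (-1 : ℝ) ^ (n - k) * ((n.choose k : ℝ)) * p.eval (a + b * k)
        = ∑ k ∈ Finset.range (n + 1),
          (((-1 : ℤ) ^ (n - k) * (n.choose k : ℤ)) : ℤ) •
            (fun x : ℝ => (p.comp (C a + C b * X)).eval x) ((0:ℝ) + k • (1:ℝ)) := by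
          refine Finset.sum_congr rfl fun k _ => ?_
          simp [eval_comp, zsmul_eq_mul]
        _ = 0 := key
  have hmul := congrArg (fun z => (-1 : ℝ) ^ n * z) key2
  simp only [mul_zero] at hmul
  rw [Finset.mul_sum] at hmul
  rw [← hmul]
  refine Finset.sum_congr rfl fun k hk => ?_
  have hkn : k ≤ n := by
    have := Finset.mem_range.mp hk; omega
  have hpow : (-1 : ℝ) ^ n * (-1 : ℝ) ^ (n - k) = (-1 : ℝ) ^ k := by
    rw [← pow_add]
    have : n + (n - k) = 2 * (n - k) + k := by omega
    rw [this, pow_add, pow_mul]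
    simp
  calc (-1:ℝ) ^ k * (n.choose k : ℝ) * p.eval (a + b * k)
      = ((-1:ℝ) ^ n * (-1:ℝ) ^ (n - k)) * (n.choose k : ℝ) * p.eval (a + b * k) := by
        rw [hpow]
    _ = (-1:ℝ) ^ n * ((-1:ℝ) ^ (n - k) * (n.choose k : ℝ) * p.eval (a + b * k)) := by ring

/-! ### The operator `T` -/

/-- The linear substitution `x ↦ (x-k)/2` as a polynomial. -/
noncomputable def lin (k : ℕ) : Polynomial ℝ := C 2⁻¹ * (X - C (k : ℝ))

/-- `TT n p = ∑_k C(n,k) p((x-k)/2)`. -/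
noncomputable def TT (n : ℕ) (p : Polynomial ℝ) : Polynomial ℝ :=
  ∑ k ∈ Finset.range (n + 1), C ((n.choose k : ℝ)) * p.comp (lin k)

lemma lin_comp_sub_one (k : ℕ) : (lin k).comp (X - C 1) = lin (k + 1) := by
  apply Polynomial.funext
  intro x
  simp [lin, eval_comp]
  ring

lemma comp_lin_sub_one (p : Polynomial ℝ) (k : ℕ) :
    (p.comp (lin k)).comp (X - C 1) = p.comp (lin (k + 1)) := by
  rw [Polynomial.comp_assoc, lin_comp_sub_one]

lemma comp_lin_sub_two (p : Polynomial ℝ) (k : ℕ) :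
    (p.comp (lin k)).comp (X - C 2) = (p.comp (X - C 1)).comp (lin k) := by
  rw [Polynomial.comp_assoc, Polynomial.comp_assoc]
  congr 1
  apply Polynomial.funext
  intro x
  simp [lin, eval_comp]
  ring

lemma TT_succ (n : ℕ) (p : Polynomial ℝ) :
    TT (n + 1) p = TT n p + (TT n p).comp (X - C 1) := by
  unfold TT
  rw [Finset.sum_range_succ' (fun k => C (((n+1).choose k : ℝ)) * p.comp (lin k)) (n+1)]
  have h1 : ∀ k ∈ Finset.range (n+1), C ((((n+1)).choose (k+1) : ℝ)) * p.comp (lin (k+1))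
      = C ((n.choose k : ℝ)) * p.comp (lin (k+1))
        + C ((n.choose (k+1) : ℝ)) * p.comp (lin (k+1)) := by
    intro k _
    rw [Nat.choose_succ_succ]
    push_cast
    rw [C_add, add_mul]
  rw [Finset.sum_congr rfl h1, Finset.sum_add_distrib]
  have h2 : (∑ k ∈ Finset.range (n+1), C ((n.choose k : ℝ)) * p.comp (lin k)).comp (X - C 1)
      = ∑ k ∈ Finset.range (n+1), C ((n.choose k : ℝ)) * p.comp (lin (k+1)) := by
    rw [Polynomial.sum_comp]
    refine Finset.sum_congr rfl fun k _ => ?_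
    rw [mul_comp, C_comp, comp_lin_sub_one]
  have h3 : (∑ k ∈ Finset.range (n+1), C ((n.choose (k+1) : ℝ)) * p.comp (lin (k+1)))
        + C (((n+1).choose 0 : ℝ)) * p.comp (lin 0)
      = ∑ k ∈ Finset.range (n+2), C ((n.choose k : ℝ)) * p.comp (lin k) := by
    rw [Finset.sum_range_succ' (fun k => C ((n.choose k : ℝ)) * p.comp (lin k)) (n+1)]
    simp
  have h4 : ∑ k ∈ Finset.range (n+2), C ((n.choose k : ℝ)) * p.comp (lin k)
      = ∑ k ∈ Finset.range (n+1), C ((n.choose k : ℝ)) * p.comp (lin k) := by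
    rw [Finset.sum_range_succ]
    simp
  linear_combination h3 + h4 - h2

lemma TT_sub (n : ℕ) (p q : Polynomial ℝ) : TT n (p - q) = TT n p - TT n q := by
  unfold TT
  rw [← Finset.sum_sub_distrib]
  refine Finset.sum_congr rfl fun k _ => ?_
  rw [sub_comp]
  ring

lemma TT_comp_sub_two (n : ℕ) (p : Polynomial ℝ) :
    (TT n p).comp (X - C 2) = TT n (p.comp (X - C 1)) := by
  unfold TT
  rw [Polynomial.sum_comp]
  refine Finset.sum_congr rfl fun k _ => ?_
  rw [mul_comp, C_comp, comp_lin_sub_two]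

/-! ### Basic properties of `ellr` -/

lemma ellr_eq (r : ℕ) :
    ellr r = C ((r.factorial : ℝ))⁻¹ * ∏ j ∈ Finset.Icc 1 r, (X + C (j : ℝ)) := by
  rw [ellr, smul_eq_C_mul]

lemma prod_Icc_shift (r : ℕ) :
    (∏ j ∈ Finset.Icc 1 (r+1), (X + C (j : ℝ))).comp (X - C 1)
      = X * ∏ j ∈ Finset.Icc 1 r, (X + C (j : ℝ)) := by
  rw [Polynomial.prod_comp]
  have h1 : ∀ j ∈ Finset.Icc 1 (r+1), (X + C ((j:ℕ) : ℝ)).comp (X - C 1)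
      = X + C (((j:ℕ) : ℝ) - 1) := by
    intro j _
    apply Polynomial.funext
    intro x
    simp [eval_comp]
    ring
  rw [Finset.prod_congr rfl h1]
  have h2 : Finset.Icc 1 (r+1) = (Finset.Icc 0 r).map (addLeftEmbedding 1) := by
    rw [Finset.map_add_left_Icc, Nat.add_comm 1 r]
  rw [h2, Finset.prod_map]
  have h3 : ∀ j ∈ Finset.Icc 0 r, (X + C ((((addLeftEmbedding 1) j : ℕ) : ℝ) - 1))
      = X + C ((j:ℕ) : ℝ) := by
    intro j _
    have he : (((addLeftEmbedding 1) j : ℕ) : ℝ) = 1 + (j : ℝ) := by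
      simp [addLeftEmbedding]
    rw [he, add_sub_cancel_left]
  calc ∏ j ∈ Finset.Icc 0 r, (X + C ((((addLeftEmbedding 1) j : ℕ) : ℝ) - 1))
      = ∏ j ∈ Finset.Icc 0 r, (X + C ((j:ℕ) : ℝ)) := Finset.prod_congr rfl h3
    _ = (X + C ((0:ℕ) : ℝ)) * ∏ j ∈ Finset.Icc 1 r, (X + C ((j:ℕ) : ℝ)) := by
        rw [show Finset.Icc 0 r = insert 0 (Finset.Icc 1 r) by ext x; simp; omega,
          Finset.prod_insert (by simp)]
    _ = X * ∏ j ∈ Finset.Icc 1 r, (X + C ((j:ℕ) : ℝ)) := by simp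

lemma ellr_nabla (r : ℕ) :
    ellr (r+1) - (ellr (r+1)).comp (X - C 1) = ellr r := by
  rw [ellr_eq (r+1), ellr_eq r, mul_comp, C_comp, prod_Icc_shift]
  rw [Finset.prod_Icc_succ_top (by omega : 1 ≤ r + 1)]
  have key : C (((r+1).factorial : ℝ))⁻¹ * ((∏ j ∈ Finset.Icc 1 r, (X + C ((j:ℕ) : ℝ)))
        * (X + C (((r+1 : ℕ)) : ℝ)))
      - C (((r+1).factorial : ℝ))⁻¹ * (X * ∏ j ∈ Finset.Icc 1 r, (X + C ((j:ℕ) : ℝ)))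
      = (C (((r+1).factorial : ℝ))⁻¹ * C (((r+1 : ℕ)) : ℝ))
        * ∏ j ∈ Finset.Icc 1 r, (X + C ((j:ℕ) : ℝ)) := by
    ring
  rw [key, ← C_mul]
  congr 2
  have h0 : (r.factorial : ℝ) ≠ 0 := Nat.cast_ne_zero.mpr r.factorial_ne_zero
  have h1 : ((r:ℝ) + 1) ≠ 0 := by positivity
  rw [Nat.factorial_succ]
  push_cast
  field_simp

lemma ellr_root (n m : ℕ) (h1 : 1 ≤ m) (h2 : m ≤ n) :
    (ellr n).eval (-(m:ℝ)) = 0 := by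
  rw [ellr, eval_smul]
  have : (∏ j ∈ Finset.Icc 1 n, (X + C ((j:ℕ) : ℝ))).eval (-(m:ℝ)) = 0 := by
    rw [eval_prod]
    refine Finset.prod_eq_zero (Finset.mem_Icc.mpr ⟨h1, h2⟩) ?_
    simp
  rw [this, smul_zero]

lemma ellr_natDegree_le (r : ℕ) : (ellr r).natDegree ≤ r := by
  rw [ellr]
  refine le_trans (natDegree_smul_le _ _) ?_
  refine le_trans (natDegree_prod_le _ _) ?_
  calc ∑ j ∈ Finset.Icc 1 r, (X + C ((j:ℕ):ℝ)).natDegree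
      ≤ ∑ _j ∈ Finset.Icc 1 r, 1 := by
        refine Finset.sum_le_sum fun j _ => ?_
        exact le_of_eq (natDegree_X_add_C _)
    _ = r := by simp

/-! ### The main eigen-identity for `TT` at the top level -/

lemma const_of_comp_two (Q : Polynomial ℝ) (h : Q.comp (X + C 2) = Q) :
    Q = C (Q.eval 0) := by
  have heval : ∀ m : ℕ, Q.eval (2 * (m:ℝ)) = Q.eval 0 := by
    intro m
    induction m with
    | zero => simp
    | succ m ih =>
      have hstep : Q.eval (2 * (m:ℝ) + 2) = Q.eval (2 * (m:ℝ)) := by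
        conv_rhs => rw [← h]
        rw [eval_comp]
        simp
      have hc : ((m+1 : ℕ) : ℝ) = (m:ℝ) + 1 := by push_cast; ring
      rw [hc, mul_add, mul_one, hstep, ih]
  have hroots : ({x | IsRoot (Q - C (Q.eval 0)) x} : Set ℝ).Infinite := by
    apply Set.infinite_of_injective_forall_mem
      (f := fun m : ℕ => (2 * m : ℝ))
    · intro a b hab
      simp only at hab
      have : (a:ℝ) = b := by linarith
      exact_mod_cast this
    · intro m
      simp only [Set.mem_setOf_eq, IsRoot, eval_sub, eval_C, heval m, sub_self]
  have := eq_zero_of_infinite_isRoot _ hroots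
  rw [sub_eq_zero] at this
  exact this

lemma TT_eval (n : ℕ) (p : Polynomial ℝ) (x : ℝ) :
    (TT n p).eval x = ∑ k ∈ Finset.range (n+1), (n.choose k : ℝ) * p.eval (2⁻¹ * (x - k)) := by
  unfold TT
  rw [eval_finset_sum]
  refine Finset.sum_congr rfl fun k _ => ?_
  rw [eval_mul, eval_C, eval_comp]
  congr 2
  simp [lin]

lemma TT_ellr (r : ℕ) : TT (r+1) (ellr r) = C 2 * ellr r := by
  induction r with
  | zero =>
    unfold TT ellr
    simp [Finset.sum_range_succ, lin, map_ofNat]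
    norm_num
  | succ r ih =>
    set ℓ := ellr (r+1) with hℓ
    set Q := TT (r+2) ℓ - C 2 * ℓ with hQ
    have hnabla := ellr_nabla r
    have e1 : ℓ.comp (X - C 1) = ℓ - ellr r := by
      rw [← hnabla]; ring
    have e2 : ℓ.comp (X - C 2) = ℓ - ellr r - (ellr r).comp (X - C 1) := by
      have hX2 : ((X : Polynomial ℝ) - C 2)
          = Polynomial.comp ((X : Polynomial ℝ) - C 1) ((X : Polynomial ℝ) - C 1) := by
        rw [sub_comp, X_comp, C_comp]
        simp only [map_ofNat, C_1]
        ring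
      rw [hX2, ← Polynomial.comp_assoc, e1, sub_comp, e1]
    have e3 : TT (r+2) (ellr r) = C 2 * ellr r + C 2 * (ellr r).comp (X - C 1) := by
      have h := TT_succ (r+1) (ellr r)
      rw [ih] at h
      rw [mul_comp, C_comp] at h
      exact h
    have hper2 : Q.comp (X - C 2) = Q := by
      rw [hQ, sub_comp, mul_comp, C_comp]
      rw [TT_comp_sub_two, e1, e2, TT_sub, e3]
      ring
    have hper : Q.comp (X + C 2) = Q := by
      conv_lhs => rw [← hper2]
      rw [Polynomial.comp_assoc]
      have hid : ((X : Polynomial ℝ) - C 2).comp (X + C 2) = X := by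
        rw [sub_comp, X_comp, C_comp]
        ring
      rw [hid, comp_X]
    have hconst := const_of_comp_two Q hper
    have heval : Q.eval (-1) = 0 := by
      have hroot : ℓ.eval (-1 : ℝ) = 0 := by
        have := ellr_root (r+1) 1 (by omega) (by omega)
        simpa using this
      have hdeg : ℓ.natDegree < r + 2 :=
        lt_of_le_of_lt (ellr_natDegree_le (r+1)) (by omega)
      have halt := alternating_sum_eq_zero (r+2) ℓ hdeg (-2⁻¹) (-2⁻¹)
      have hterm : ∀ k ∈ Finset.range (r+3),
          ((r+2).choose k : ℝ) * ℓ.eval (2⁻¹ * ((-1:ℝ) - k))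
          = (-1:ℝ)^k * ((r+2).choose k : ℝ) * ℓ.eval (-2⁻¹ + (-2⁻¹) * (k:ℝ)) := by
        intro k hk
        have harg : (-2⁻¹ + (-2⁻¹) * (k:ℝ)) = 2⁻¹ * ((-1:ℝ) - k) := by ring
        rw [harg]
        rcases Nat.even_or_odd k with he | ho
        · rw [he.neg_one_pow, one_mul]
        · obtain ⟨t, ht⟩ := ho
          have hkk : k ≤ r + 2 := by
            have := Finset.mem_range.mp hk; omega
          have hzero : ℓ.eval (2⁻¹ * ((-1:ℝ) - k)) = 0 := by
            have hval : 2⁻¹ * ((-1:ℝ) - k) = -(((t+1 : ℕ)):ℝ) := by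
              rw [ht]; push_cast; ring
            rw [hval]
            exact ellr_root (r+1) (t+1) (by omega) (by omega)
          rw [hzero]
          ring
      have hTT : (TT (r+2) ℓ).eval (-1) = 0 := by
        rw [TT_eval, Finset.sum_congr rfl hterm]
        exact halt
      rw [hQ, eval_sub, eval_mul, eval_C, hTT, hroot]
      ring
    have hc0 : Q.eval 0 = 0 := by
      have h := congrArg (fun p => Polynomial.eval (-1 : ℝ) p) hconst
      simp only [eval_C] at h
      rw [heval] at h
      exact h.symm
    have hQ0 : Q = 0 := by rw [hconst, hc0, C_0]
    exact sub_eq_zero.mp hQ0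

/-! ### Derivatives -/

lemma TT_derivative (n : ℕ) (p : Polynomial ℝ) :
    derivative (TT n p) = C 2⁻¹ * TT n (derivative p) := by
  unfold TT
  rw [map_sum, Finset.mul_sum]
  refine Finset.sum_congr rfl fun k _ => ?_
  rw [derivative_C_mul, derivative_comp]
  have : derivative (lin k) = C 2⁻¹ := by
    simp [lin]
  rw [this]
  ring

lemma TT_derivative_iter (n m : ℕ) (p : Polynomial ℝ) :
    derivative^[m] (TT n p) = C ((2⁻¹ : ℝ) ^ m) * TT n (derivative^[m] p) := by
  induction m generalizing p with
  | zero => simp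
  | succ m ih =>
    rw [Function.iterate_succ_apply, TT_derivative, Function.iterate_succ_apply]
    rw [iterate_derivative_C_mul, ih]
    rw [← mul_assoc, ← C_mul, pow_succ]
    ring_nf

lemma TT_eigen (r m : ℕ) :
    TT (r+1) (derivative^[m] (ellr r)) = C ((2:ℝ) ^ (m+1)) * derivative^[m] (ellr r) := by
  have h1 := TT_derivative_iter (r+1) m (ellr r)
  rw [TT_ellr r, iterate_derivative_C_mul] at h1
  have h2 := congrArg (fun p => C ((2:ℝ)^m) * p) h1
  rw [← mul_assoc, ← C_mul, ← mul_assoc, ← C_mul] at h2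
  have e1 : (2:ℝ)^m * (2⁻¹:ℝ)^m = 1 := by
    rw [← mul_pow]
    norm_num
  rw [e1, C_1, one_mul] at h2
  rw [← h2, pow_succ]

/-! ### The parity splitting of a single term -/

lemma parity_term (q : Polynomial ℝ) (α : ℤ) (k : ℕ) (c : ℝ) :
    (if (2:ℤ) ∣ (α - k) then c * q.eval ((((α - k)/2 : ℤ) : ℝ)) else 0)
      = 2⁻¹ * (c * q.eval (2⁻¹ * ((α:ℝ) - k)))
        + (if (2:ℤ) ∣ α then (1:ℝ) else -1) * 2⁻¹ *
          ((-1:ℝ)^k * c * q.eval (2⁻¹ * (α:ℝ) + (-2⁻¹) * (k:ℝ))) := by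
  have harg : 2⁻¹ * (α:ℝ) + (-2⁻¹) * (k:ℝ) = 2⁻¹ * ((α:ℝ) - k) := by ring
  rw [harg]
  by_cases hd : (2:ℤ) ∣ (α - k)
  · obtain ⟨c0, hc0⟩ := hd
    have hcast : ((((α - k)/2 : ℤ)) : ℝ) = 2⁻¹ * ((α:ℝ) - k) := by
      have h1 : (α - (k:ℤ))/2 = c0 := by omega
      have h2 : (α:ℝ) - (k:ℝ) = 2 * (c0:ℝ) := by exact_mod_cast hc0
      rw [h1, h2]
      ring
    rw [if_pos ⟨c0, hc0⟩, hcast]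
    have hsign : (if (2:ℤ) ∣ α then (1:ℝ) else -1) * (-1:ℝ)^k = 1 := by
      by_cases h2a : (2:ℤ) ∣ α
      · rw [if_pos h2a]
        have hk : Even k := by rw [Nat.even_iff]; omega
        rw [hk.neg_one_pow]; ring
      · rw [if_neg h2a]
        have hk : Odd k := by rw [Nat.odd_iff]; omega
        rw [hk.neg_one_pow]; ring
    linear_combination (-(2⁻¹) * (c * q.eval (2⁻¹ * ((α:ℝ) - k)))) * hsign
  · rw [if_neg hd]
    have hsign : (if (2:ℤ) ∣ α then (1:ℝ) else -1) * (-1:ℝ)^k = -1 := by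
      by_cases h2a : (2:ℤ) ∣ α
      · rw [if_pos h2a]
        have hk : Odd k := by rw [Nat.odd_iff]; omega
        rw [hk.neg_one_pow]; ring
      · rw [if_neg h2a]
        have hk : Even k := by rw [Nat.even_iff]; omega
        rw [hk.neg_one_pow]; ring
    linear_combination (-(2⁻¹) * (c * q.eval (2⁻¹ * ((α:ℝ) - k)))) * hsign

end BsplineAux

open BsplineAux in
/-- The polynomials `p_i = ℓ_r^{(r-i)}`, restricted to `ℤ`, are eigensequences of the
B-spline subdivision operator: `∑_β a_r(α - 2β) p_i(β) = 2^{-i} p_i(α)` for all `α ∈ ℤ`,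
`i = 0, …, r`. -/
theorem bspline_eigen (r i : ℕ) (hi : i ≤ r) (α : ℤ) :
    ∑ᶠ β : ℤ, bsplineMask r (α - 2 * β) * (derivative^[r - i] (ellr r)).eval (β : ℝ)
      = ((2 : ℝ) ^ i)⁻¹ * (derivative^[r - i] (ellr r)).eval (α : ℝ) := by
  classical
  set q : Polynomial ℝ := derivative^[r - i] (ellr r) with hq
  set m : ℕ := r - i with hm
  -- Nonzero terms force `0 ≤ α - 2β ≤ r + 1`.
  have hsupp0 : ∀ β : ℤ, bsplineMask r (α - 2*β) * q.eval (β:ℝ) ≠ 0 →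
      0 ≤ α - 2*β ∧ α - 2*β ≤ r + 1 := by
    intro β hβ
    have h1 : bsplineMask r (α - 2*β) ≠ 0 := fun h => hβ (by rw [h, zero_mul])
    simp only [bsplineMask] at h1
    by_cases hpos : 0 ≤ α - 2*β
    · rw [if_pos hpos] at h1
      refine ⟨hpos, ?_⟩
      by_contra hgt
      push_neg at hgt
      have : (r+1).choose (α - 2*β).toNat = 0 :=
        Nat.choose_eq_zero_of_lt (by omega)
      rw [this] at h1
      simp at h1
    · rw [if_neg hpos] at h1
      exact absurd rfl h1
  -- Reduce the `finsum` to a finite sum.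
  have hsub : (Function.support fun β : ℤ => bsplineMask r (α - 2*β) * q.eval (β:ℝ))
      ⊆ ↑(Finset.Icc (α/2 - (r+2)) (α/2 + 1) : Finset ℤ) := by
    intro β hβ
    have := hsupp0 β hβ
    simp only [Finset.coe_Icc, Set.mem_Icc]
    omega
  rw [finsum_eq_sum_of_support_subset _ hsub]
  -- Restrict to the exact support window.
  rw [← Finset.sum_filter_of_ne (p := fun β => 0 ≤ α - 2*β ∧ α - 2*β ≤ r + 1)
    (fun β _ h => hsupp0 β h)]
  -- Reindex by `k = α - 2β`.
  have hbij : ∑ β ∈ (Finset.Icc (α/2 - (r+2)) (α/2 + 1)).filter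
        (fun β => 0 ≤ α - 2*β ∧ α - 2*β ≤ r + 1),
        bsplineMask r (α - 2*β) * q.eval (β:ℝ)
      = ∑ k ∈ (Finset.range (r+2)).filter (fun k : ℕ => (2:ℤ) ∣ (α - k)),
        ((2:ℝ)^r)⁻¹ * (((r+1).choose k : ℝ) * q.eval ((((α - k)/2 : ℤ) : ℝ))) := by
    refine Finset.sum_nbij' (i := fun β => (α - 2*β).toNat) (j := fun k => (α - k)/2)
      ?_ ?_ ?_ ?_ ?_
    · intro β hβ
      simp only [Finset.mem_filter, Finset.mem_Icc] at hβ
      simp only [Finset.mem_filter, Finset.mem_range]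
      omega
    · intro k hk
      simp only [Finset.mem_filter, Finset.mem_range] at hk
      simp only [Finset.mem_filter, Finset.mem_Icc]
      omega
    · intro β hβ
      simp only [Finset.mem_filter, Finset.mem_Icc] at hβ
      omega
    · intro k hk
      simp only [Finset.mem_filter, Finset.mem_range] at hk
      omega
    · intro β hβ
      simp only [Finset.mem_filter, Finset.mem_Icc] at hβ
      have ht : (((α - 2*β).toNat : ℤ)) = α - 2*β := Int.toNat_of_nonneg hβ.2.1
      have hb : (α - ((α - 2*β).toNat : ℤ))/2 = β := by omega
      simp only [bsplineMask]
      rw [if_pos hβ.2.1, hb]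
      ring
  rw [hbij]
  rw [← Finset.mul_sum]
  -- drop the filter back into an `if`
  rw [Finset.sum_filter]
  -- parity splitting
  have hsplit : ∑ k ∈ Finset.range (r+2),
      (if (2:ℤ) ∣ (α - k) then ((r+1).choose k : ℝ) * q.eval ((((α - k)/2 : ℤ) : ℝ)) else 0)
      = 2⁻¹ * ∑ k ∈ Finset.range (r+2),
          (((r+1).choose k : ℝ) * q.eval (2⁻¹ * ((α:ℝ) - k)))
        + (if (2:ℤ) ∣ α then (1:ℝ) else -1) * 2⁻¹ *
          ∑ k ∈ Finset.range (r+2),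
            ((-1:ℝ)^k * ((r+1).choose k : ℝ) * q.eval (2⁻¹ * (α:ℝ) + (-2⁻¹) * (k:ℝ))) := by
    rw [Finset.mul_sum, Finset.mul_sum, ← Finset.sum_add_distrib]
    refine Finset.sum_congr rfl fun k _ => ?_
    exact parity_term q α k _
  rw [hsplit]
  -- the alternating part vanishes
  have hdegq : q.natDegree < r + 1 := by
    refine lt_of_le_of_lt ?_ (Nat.lt_succ_of_le (le_refl r))
    refine le_trans (natDegree_iterate_derivative _ _) ?_
    exact le_trans (Nat.sub_le _ _) (ellr_natDegree_le r)
  have halt := alternating_sum_eq_zero (r+1) q hdegq (2⁻¹ * (α:ℝ)) (-2⁻¹)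
  have halt' : ∑ k ∈ Finset.range (r+2),
      ((-1:ℝ)^k * ((r+1).choose k : ℝ) * q.eval (2⁻¹ * (α:ℝ) + (-2⁻¹) * (k:ℝ))) = 0 := halt
  rw [halt', mul_zero, add_zero]
  -- the symmetric part is the `TT` eigen-identity
  have hTT : ∑ k ∈ Finset.range (r+2),
      (((r+1).choose k : ℝ) * q.eval (2⁻¹ * ((α:ℝ) - k))) = (TT (r+1) q).eval (α:ℝ) := by
    rw [TT_eval]
  rw [hTT, TT_eigen r m, eval_mul, eval_C]
  -- final arithmetic
  have hpow : (2:ℝ)^m * (2:ℝ)^i = (2:ℝ)^r := by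
    rw [← pow_add]
    congr 1
    omega
  have hinv : ((2:ℝ)^i)⁻¹ = (2:ℝ)^m * ((2:ℝ)^r)⁻¹ := by
    have h2i : ((2:ℝ)^i) ≠ 0 := by positivity
    have h2r : ((2:ℝ)^r) ≠ 0 := by positivity
    field_simp
    linear_combination -hpow
  rw [hinv, pow_succ]
  ring
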